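/- arXiv:0801.3330 — 2 statements merged into one kernel-verified Lean document; each statement's English description precedes it below -/
import Mathlib

section
/- If μ is a nondegenerate critical offspring distribution with finite nonzero variance σ², then for a random walk (W_n) with i.i.d. steps distributed as ξ−1 (ξ ~ μ), one has sup_{n ≥ 1} sup_{x ≥ 0} x·P(W_n = x) < ∞. -/
open scoped ENNReal

/-- `P(W_n = x)` for the random walk with `n` i.i.d. steps distributed
as `ξ - 1`, `ξ ~ μ`, started at `0`. -/
noncomputable def walkProb (μ : ℕ → ℝ≥0∞) (n : ℕ) (x : ℤ) : ℝ≥0∞ :=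
  ∑' ξ : Fin n → ℕ,
    if (∑ i : Fin n, ((ξ i : ℤ) - 1)) = x then ∏ i : Fin n, μ (ξ i) else 0


noncomputable section AuxConv

/-- Type synonym: sequence space `ℤ → ℝ≥0∞` with convolution as multiplication. -/
def ConvAlg : Type := ℤ → ℝ≥0∞

namespace ConvAlg

instance : AddCommMonoid ConvAlg := inferInstanceAs (AddCommMonoid (ℤ → ℝ≥0∞))

/-- convolution -/
protected def conv (f g : ConvAlg) : ConvAlg := fun x => ∑' y : ℤ, f y * g (x - y)

/-- point mass -/
def delta (a : ℤ) (c : ℝ≥0∞) : ConvAlg := fun x => if x = a then c else 0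

lemma delta_apply (a : ℤ) (c : ℝ≥0∞) (x : ℤ) : delta a c x = if x = a then c else 0 := rfl

lemma add_apply (f g : ConvAlg) (x : ℤ) : (f + g) x = f x + g x := rfl

lemma zero_apply (x : ℤ) : (0 : ConvAlg) x = 0 := rfl

lemma conv_apply (f g : ConvAlg) (x : ℤ) : f.conv g x = ∑' y : ℤ, f y * g (x - y) := rfl

lemma conv_comm (f g : ConvAlg) : f.conv g = g.conv f := by
  funext x
  rw [conv_apply, conv_apply, ← (Equiv.subLeft x).tsum_eq (fun y => f y * g (x - y))]
  refine tsum_congr fun z => ?_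
  simp [mul_comm]

lemma delta_conv (a : ℤ) (c : ℝ≥0∞) (g : ConvAlg) :
    (delta a c).conv g = fun x => c * g (x - a) := by
  funext x
  rw [conv_apply]
  rw [tsum_eq_single a]
  · simp [delta]
  · intro y hy; simp [delta, hy]

lemma conv_assoc (f g h : ConvAlg) : (f.conv g).conv h = f.conv (g.conv h) := by
  funext x
  rw [conv_apply, conv_apply]
  calc ∑' y : ℤ, (∑' z : ℤ, f z * g (y - z)) * h (x - y)
      = ∑' (y : ℤ) (z : ℤ), f z * g (y - z) * h (x - y) := by
        refine tsum_congr fun y => ?_; rw [ENNReal.tsum_mul_right]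
    _ = ∑' (z : ℤ) (y : ℤ), f z * g (y - z) * h (x - y) := ENNReal.tsum_comm
    _ = ∑' (z : ℤ) (y : ℤ), f z * (g (y - z) * h (x - y)) := by simp only [mul_assoc]
    _ = ∑' (z : ℤ), f z * (g.conv h) (x - z) := by
        refine tsum_congr fun z => ?_
        rw [← (Equiv.addLeft z).tsum_eq (fun y => f z * (g (y - z) * h (x - y))),
          ENNReal.tsum_mul_left, conv_apply]
        refine congrArg _ (tsum_congr fun w => ?_)
        simp only [Equiv.coe_addLeft, add_sub_cancel_left, sub_add_eq_sub_sub]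

lemma conv_add (f g h : ConvAlg) : f.conv (g + h) = f.conv g + f.conv h := by
  funext x
  rw [add_apply, conv_apply, conv_apply, conv_apply, ← ENNReal.tsum_add]
  exact tsum_congr fun y => by rw [add_apply, mul_add]

lemma conv_zero (f : ConvAlg) : f.conv 0 = 0 := by
  funext x; rw [conv_apply]; simp [zero_apply]

instance : CommSemiring ConvAlg where
  __ := (inferInstance : AddCommMonoid ConvAlg)
  mul := ConvAlg.conv
  left_distrib := conv_add
  right_distrib := fun f g h => by
    show (f + g).conv h = f.conv h + g.conv h
    rw [conv_comm, conv_add, conv_comm h f, conv_comm h g]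
  zero_mul := fun f => by show ConvAlg.conv 0 f = 0; rw [conv_comm, conv_zero]
  mul_zero := fun f => conv_zero f
  mul_assoc := conv_assoc
  one := delta 0 1
  one_mul := fun f => by
    show (delta 0 1).conv f = f
    rw [delta_conv]; funext x; simp
  mul_one := fun f => by
    show f.conv (delta 0 1) = f
    rw [conv_comm, delta_conv]; funext x; simp
  mul_comm := conv_comm

lemma mul_def (f g : ConvAlg) : f * g = f.conv g := rfl

lemma one_def : (1 : ConvAlg) = delta 0 1 := rfl

lemma natCast_eq_delta (N : ℕ) : (N : ConvAlg) = delta 0 (N : ℝ≥0∞) := by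
  induction N with
  | zero => funext x; simp [delta, zero_apply]
  | succ n ih =>
    rw [Nat.cast_succ, ih]
    funext x
    rw [add_apply, one_def, delta_apply, delta_apply, delta_apply]
    by_cases h : x = 0 <;> simp [h]

lemma delta_mul_delta (a b : ℤ) (c d : ℝ≥0∞) :
    delta a c * delta b d = delta (a + b) (c * d) := by
  rw [mul_def, delta_conv]
  funext x
  rw [delta_apply, delta_apply]
  by_cases h : x = a + b
  · rw [if_pos h, if_pos (by omega)]
  · rw [if_neg h, if_neg (by omega), mul_zero]

lemma delta_pow (a : ℤ) (c : ℝ≥0∞) (n : ℕ) : (delta a c) ^ n = delta (n * a) (c ^ n) := by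
  induction n with
  | zero => simp [one_def]
  | succ n ih =>
    rw [pow_succ, ih, delta_mul_delta, pow_succ]
    congr 1
    push_cast; ring

lemma delta_zero_mul (c : ℝ≥0∞) (f : ConvAlg) : delta 0 c * f = fun x => c * f x := by
  rw [mul_def, delta_conv]; simp; rfl

/-- total mass -/
def mass (f : ConvAlg) : ℝ≥0∞ := ∑' y : ℤ, f y

lemma mass_delta (a : ℤ) (c : ℝ≥0∞) : mass (delta a c) = c := by
  erw [mass, tsum_eq_single a] <;> simp [delta]; tauto

lemma mass_add (f g : ConvAlg) : mass (f + g) = mass f + mass g := by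
  erw [mass, mass, mass, ← ENNReal.tsum_add]; rfl

lemma mass_mul (f g : ConvAlg) : mass (f * g) = mass f * mass g := by
  rw [mass, mass, mass]
  calc ∑' x : ℤ, (f * g) x = ∑' (x : ℤ) (y : ℤ), f y * g (x - y) := by rfl
    _ = ∑' (y : ℤ) (x : ℤ), f y * g (x - y) := ENNReal.tsum_comm
    _ = ∑' (y : ℤ), f y * ∑' (x : ℤ), g x := by
        refine tsum_congr fun y => ?_
        rw [ENNReal.tsum_mul_left, ← (Equiv.subRight y).tsum_eq (fun x => g x)]
        simp [Equiv.subRight_apply]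
    _ = _ := by erw [ENNReal.tsum_mul_right]

lemma mass_pow (f : ConvAlg) (n : ℕ) : mass (f ^ n) = mass f ^ n := by
  induction n with
  | zero => simpa [one_def] using mass_delta 0 1
  | succ n ih => rw [pow_succ, mass_mul, ih, pow_succ]

lemma sum_apply {α : Type*} (s : Finset α) (F : α → ConvAlg) (x : ℤ) :
    (∑ a ∈ s, F a) x = ∑ a ∈ s, F a x := by
  classical
  induction s using Finset.induction with
  | empty => rfl
  | insert _ _ h ih => rw [Finset.sum_insert h, Finset.sum_insert h, add_apply, ih]

lemma mul_apply_le_of_le (f g : ConvAlg) (c : ℝ≥0∞) (h : ∀ y, f y ≤ c) (x : ℤ) :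
    (f * g) x ≤ c * mass g := by
  rw [mul_def, conv_apply]
  calc ∑' y : ℤ, f y * g (x - y) ≤ ∑' y : ℤ, c * g (x - y) :=
        ENNReal.tsum_le_tsum fun y => mul_le_mul_left (h y) _
    _ = c * ∑' y : ℤ, g (x - y) := ENNReal.tsum_mul_left
    _ = c * mass g := by
        rw [show mass g = ∑' y : ℤ, g y from rfl, ← (Equiv.subLeft x).tsum_eq (fun y => g y)]
        simp [Equiv.subLeft_apply]

end ConvAlg
open ConvAlg

noncomputable section AuxWalk

/-- the step distribution of the walk, as an element of `ConvAlg` -/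
def stepA (μ : ℕ → ℝ≥0∞) : ConvAlg := fun z => if -1 ≤ z then μ (z + 1).toNat else 0

lemma stepA_nat (μ : ℕ → ℝ≥0∞) (k : ℕ) : stepA μ ((k : ℤ) - 1) = μ k := by
  have h1 : ((k : ℤ) - 1 + 1) = (k : ℤ) := by ring
  simp [stepA, h1, show (-1 : ℤ) ≤ (k : ℤ) - 1 by omega]

lemma stepA_neg (μ : ℕ → ℝ≥0∞) (z : ℤ) (h : z < -1) : stepA μ z = 0 := by
  simp [stepA, show ¬ (-1 ≤ z) by omega]

/-- reindexing sums over the support of the step distribution -/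
lemma tsum_shift (f : ℤ → ℝ≥0∞) (h : ∀ z : ℤ, z < -1 → f z = 0) :
    ∑' z : ℤ, f z = ∑' k : ℕ, f ((k : ℤ) - 1) := by
  refine (Function.Injective.tsum_eq (g := fun k : ℕ => (k : ℤ) - 1)
    (fun a b hab => by simp only [] at hab; omega) ?_).symm
  intro z hz
  have h1 : -1 ≤ z := by
    by_contra hlt
    exact hz (h z (by omega))
  exact ⟨(z + 1).toNat, by simp; omega⟩

lemma walkProb_eq_pow (μ : ℕ → ℝ≥0∞) (n : ℕ) (x : ℤ) :
    walkProb μ n x = (stepA μ ^ n) x := by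
  induction n generalizing x with
  | zero =>
    rw [walkProb, pow_zero, one_def, delta_apply]
    rw [tsum_eq_single (fun (_ : Fin 0) => 0) (fun b hb => absurd (funext fun i => i.elim0) hb)]
    simp [eq_comm]
  | succ n ih =>
    have key : walkProb μ (n+1) x = ∑' k : ℕ, μ k * walkProb μ n (x - ((k : ℤ) - 1)) := by
      rw [walkProb, ← (Fin.consEquiv (fun _ : Fin (n+1) => ℕ)).tsum_eq]
      simp only [Fin.consEquiv_apply]
      rw [ENNReal.tsum_prod']
      refine tsum_congr fun k => ?_
      rw [walkProb, ← ENNReal.tsum_mul_left]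
      refine tsum_congr fun ξ => ?_
      dsimp only
      have hsum : (∑ i : Fin (n+1), ((Fin.cons (α := fun _ => ℕ) k ξ i : ℤ) - 1))
          = ((k:ℤ) - 1) + ∑ i : Fin n, ((ξ i : ℤ) - 1) := by
        rw [Fin.sum_univ_succ]; simp
      have hprod : (∏ i : Fin (n+1), μ (Fin.cons (α := fun _ => ℕ) k ξ i)) = μ k * ∏ i : Fin n, μ (ξ i) := by
        rw [Fin.prod_univ_succ]; simp
      rw [hsum, hprod]
      by_cases h : (∑ i : Fin n, ((ξ i : ℤ) - 1)) = x - ((k:ℤ) - 1)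
      · rw [if_pos (by omega), if_pos h]
      · rw [if_neg (by omega), if_neg h, mul_zero]
    rw [key, pow_succ', mul_def, conv_apply, tsum_shift _ (fun z hz => by
      rw [stepA_neg μ z hz, zero_mul])]
    refine tsum_congr fun k => ?_
    rw [stepA_nat, ih]

lemma walk_supp (μ : ℕ → ℝ≥0∞) (n : ℕ) (z : ℤ) (h : z < -(n : ℤ)) : (stepA μ ^ n) z = 0 := by
  induction n generalizing z with
  | zero => rw [pow_zero, one_def, delta_apply, if_neg (by omega)]
  | succ n ih =>
    rw [pow_succ', mul_def, conv_apply]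
    refine ENNReal.tsum_eq_zero.mpr fun y => ?_
    by_cases hy : y < -1
    · rw [stepA_neg μ y hy, zero_mul]
    · rw [ih (z - y) (by push_cast; omega), mul_zero]

end AuxWalk
noncomputable section AuxMoments
open ConvAlg

variable (μ : ℕ → ℝ≥0∞) (σ2 : ℝ)

lemma tsum_tsum_factor (A B : ℤ → ℝ≥0∞) :
    ∑' (z : ℤ) (u : ℤ), A z * B u = (∑' z : ℤ, A z) * (∑' u : ℤ, B u) := by
  simp_rw [ENNReal.tsum_mul_left, ENNReal.tsum_mul_right]

lemma tsum_tsum_add (F G : ℤ → ℤ → ℝ≥0∞) :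
    ∑' (z : ℤ) (u : ℤ), (F z u + G z u)
      = (∑' (z : ℤ) (u : ℤ), F z u) + ∑' (z : ℤ) (u : ℤ), G z u := by
  rw [← ENNReal.tsum_add]
  exact tsum_congr fun z => ENNReal.tsum_add

lemma mass_stepA (hμ : ∑' k, μ k = 1) : mass (stepA μ) = 1 := by
  rw [mass, tsum_shift _ (stepA_neg μ)]
  simp_rw [stepA_nat]
  exact hμ

lemma tsum_stepA (hμ : ∑' k, μ k = 1) : ∑' z : ℤ, stepA μ z = 1 :=
  mass_stepA μ hμ

lemma mass_walk (hμ : ∑' k, μ k = 1) (n : ℕ) : ∑' u : ℤ, (stepA μ ^ n) u = 1 := by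
  have := mass_pow (stepA μ) n
  rw [mass_stepA μ hμ, one_pow] at this
  exact this

lemma fm_stepA (hmean : ∑' k : ℕ, (k : ℝ≥0∞) * μ k = 1) :
    ∑' z : ℤ, ENNReal.ofReal ((z : ℝ) + 1) * stepA μ z = 1 := by
  rw [tsum_shift _ (fun z hz => by rw [stepA_neg μ z hz, mul_zero])]
  rw [← hmean]
  refine tsum_congr fun k => ?_
  rw [stepA_nat]
  congr 1
  rw [show (((k : ℤ) - 1 : ℤ) : ℝ) + 1 = (k : ℝ) by push_cast; ring, ENNReal.ofReal_natCast]

lemma sm_nat (hμ : ∑' k, μ k = 1) (hmean : ∑' k : ℕ, (k : ℝ≥0∞) * μ k = 1)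
    (hvar : ∑' k : ℕ, ENNReal.ofReal (((k : ℝ) - 1) ^ 2) * μ k = ENNReal.ofReal σ2) :
    ∑' k : ℕ, ENNReal.ofReal ((k : ℝ) ^ 2) * μ k = ENNReal.ofReal σ2 + 1 := by
  have key : ∀ k : ℕ, ENNReal.ofReal ((k : ℝ) ^ 2) * μ k + μ k
      = ENNReal.ofReal (((k : ℝ) - 1) ^ 2) * μ k + 2 * (k : ℝ≥0∞) * μ k := by
    intro k
    have h2 : ENNReal.ofReal ((k : ℝ) ^ 2) + 1
        = ENNReal.ofReal (((k : ℝ) - 1) ^ 2) + 2 * (k : ℝ≥0∞) := by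
      rw [← ENNReal.ofReal_one, ← ENNReal.ofReal_add (by positivity) zero_le_one,
        show (k : ℝ) ^ 2 + 1 = ((k : ℝ) - 1) ^ 2 + 2 * (k : ℝ) by ring,
        ENNReal.ofReal_add (by positivity) (by positivity)]
      congr 1
      rw [ENNReal.ofReal_mul (by norm_num), ENNReal.ofReal_natCast, ENNReal.ofReal_ofNat]
    calc ENNReal.ofReal ((k : ℝ) ^ 2) * μ k + μ k
        = (ENNReal.ofReal ((k : ℝ) ^ 2) + 1) * μ k := by rw [add_mul, one_mul]
      _ = (ENNReal.ofReal (((k : ℝ) - 1) ^ 2) + 2 * (k : ℝ≥0∞)) * μ k := by rw [h2]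
      _ = _ := by rw [add_mul]
  have hsum : (∑' k : ℕ, ENNReal.ofReal ((k : ℝ) ^ 2) * μ k) + 1
      = (ENNReal.ofReal σ2 + 1) + 1 := by
    calc (∑' k : ℕ, ENNReal.ofReal ((k : ℝ) ^ 2) * μ k) + 1
        = ∑' k : ℕ, (ENNReal.ofReal ((k : ℝ) ^ 2) * μ k + μ k) := by
          rw [ENNReal.tsum_add, hμ]
      _ = ∑' k : ℕ, (ENNReal.ofReal (((k : ℝ) - 1) ^ 2) * μ k + 2 * (k : ℝ≥0∞) * μ k) :=
          tsum_congr key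
      _ = ENNReal.ofReal σ2 + 2 := by
          rw [ENNReal.tsum_add, hvar]
          congr 1
          simp_rw [mul_assoc]
          rw [ENNReal.tsum_mul_left, hmean, mul_one]
      _ = (ENNReal.ofReal σ2 + 1) + 1 := by ring
  exact (ENNReal.add_left_inj ENNReal.one_ne_top).mp hsum

lemma sm_stepA (hμ : ∑' k, μ k = 1) (hmean : ∑' k : ℕ, (k : ℝ≥0∞) * μ k = 1)
    (hvar : ∑' k : ℕ, ENNReal.ofReal (((k : ℝ) - 1) ^ 2) * μ k = ENNReal.ofReal σ2) :
    ∑' z : ℤ, ENNReal.ofReal (((z : ℝ) + 1) ^ 2) * stepA μ z = ENNReal.ofReal σ2 + 1 := by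
  rw [tsum_shift _ (fun z hz => by rw [stepA_neg μ z hz, mul_zero])]
  rw [← sm_nat μ σ2 hμ hmean hvar]
  refine tsum_congr fun k => ?_
  rw [stepA_nat]
  congr 2
  push_cast
  ring

lemma fm_walk (hμ : ∑' k, μ k = 1) (hmean : ∑' k : ℕ, (k : ℝ≥0∞) * μ k = 1) (n : ℕ) :
    ∑' z : ℤ, ENNReal.ofReal ((z : ℝ) + (n : ℝ)) * (stepA μ ^ n) z = (n : ℝ≥0∞) := by
  induction n with
  | zero =>
    rw [pow_zero, one_def]
    rw [tsum_eq_single 0 (fun z hz => by rw [delta_apply, if_neg hz, mul_zero])]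
    simp
  | succ n ih =>
    rw [pow_succ', mul_def]
    calc ∑' x : ℤ, ENNReal.ofReal ((x : ℝ) + ((n + 1 : ℕ) : ℝ)) * (stepA μ).conv (stepA μ ^ n) x
        = ∑' (x : ℤ) (z : ℤ), ENNReal.ofReal ((x : ℝ) + ((n + 1 : ℕ) : ℝ))
            * (stepA μ z * (stepA μ ^ n) (x - z)) := by
          refine tsum_congr fun x => ?_
          rw [conv_apply, ENNReal.tsum_mul_left]
      _ = ∑' (z : ℤ) (x : ℤ), ENNReal.ofReal ((x : ℝ) + ((n + 1 : ℕ) : ℝ))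
            * (stepA μ z * (stepA μ ^ n) (x - z)) := ENNReal.tsum_comm
      _ = ∑' (z : ℤ) (u : ℤ), ENNReal.ofReal (((z + u : ℤ) : ℝ) + ((n + 1 : ℕ) : ℝ))
            * (stepA μ z * (stepA μ ^ n) u) := by
          refine tsum_congr fun z => ?_
          rw [← (Equiv.addLeft z).tsum_eq]
          refine tsum_congr fun u => ?_
          simp [Equiv.coe_addLeft, add_sub_cancel_left]
      _ = ∑' (z : ℤ) (u : ℤ), ((ENNReal.ofReal ((z : ℝ) + 1) * stepA μ z) * (stepA μ ^ n) u
            + stepA μ z * (ENNReal.ofReal ((u : ℝ) + (n : ℝ)) * (stepA μ ^ n) u)) := by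
          refine tsum_congr fun z => tsum_congr fun u => ?_
          rcases eq_or_ne (stepA μ z) 0 with hs | hs
          · simp [hs]
          rcases eq_or_ne ((stepA μ ^ n) u) 0 with hw | hw
          · simp [hw]
          have hz : (-1 : ℤ) ≤ z := by
            by_contra h; exact hs (stepA_neg μ z (by omega))
          have hu : -(n : ℤ) ≤ u := by
            by_contra h; exact hw (walk_supp μ n u (by omega))
          have hz' : (0 : ℝ) ≤ (z : ℝ) + 1 := by exact_mod_cast by omega
          have hu' : (0 : ℝ) ≤ (u : ℝ) + (n : ℝ) := by
            exact_mod_cast (by omega : (0 : ℤ) ≤ u + (n : ℤ))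
          rw [show ((z + u : ℤ) : ℝ) + ((n + 1 : ℕ) : ℝ) = ((z : ℝ) + 1) + ((u : ℝ) + (n : ℝ))
              by push_cast; ring]
          rw [ENNReal.ofReal_add hz' hu']
          ring
      _ = (∑' z : ℤ, ENNReal.ofReal ((z : ℝ) + 1) * stepA μ z) * (∑' u : ℤ, (stepA μ ^ n) u)
            + (∑' z : ℤ, stepA μ z) * (∑' u : ℤ, ENNReal.ofReal ((u : ℝ) + (n : ℝ))
              * (stepA μ ^ n) u) := by
          erw [tsum_tsum_add, tsum_tsum_factor, tsum_tsum_factor]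
      _ = ((n + 1 : ℕ) : ℝ≥0∞) := by
          rw [fm_stepA μ hmean, mass_walk μ hμ n, ih, tsum_stepA μ hμ]
          push_cast
          ring

lemma sm'_walk (hμ : ∑' k, μ k = 1) (hmean : ∑' k : ℕ, (k : ℝ≥0∞) * μ k = 1)
    (hvar : ∑' k : ℕ, ENNReal.ofReal (((k : ℝ) - 1) ^ 2) * μ k = ENNReal.ofReal σ2) (n : ℕ) :
    ∑' z : ℤ, ENNReal.ofReal (((z : ℝ) + (n : ℝ)) ^ 2) * (stepA μ ^ n) z
      = (n : ℝ≥0∞) * ENNReal.ofReal σ2 + (n : ℝ≥0∞) ^ 2 := by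
  induction n with
  | zero =>
    rw [pow_zero, one_def]
    rw [tsum_eq_single 0 (fun z hz => by rw [delta_apply, if_neg hz, mul_zero])]
    simp
  | succ n ih =>
    rw [pow_succ', mul_def]
    calc ∑' x : ℤ, ENNReal.ofReal (((x : ℝ) + ((n + 1 : ℕ) : ℝ)) ^ 2)
            * (stepA μ).conv (stepA μ ^ n) x
        = ∑' (x : ℤ) (z : ℤ), ENNReal.ofReal (((x : ℝ) + ((n + 1 : ℕ) : ℝ)) ^ 2)
            * (stepA μ z * (stepA μ ^ n) (x - z)) := by
          refine tsum_congr fun x => ?_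
          rw [conv_apply, ENNReal.tsum_mul_left]
      _ = ∑' (z : ℤ) (x : ℤ), ENNReal.ofReal (((x : ℝ) + ((n + 1 : ℕ) : ℝ)) ^ 2)
            * (stepA μ z * (stepA μ ^ n) (x - z)) := ENNReal.tsum_comm
      _ = ∑' (z : ℤ) (u : ℤ), ENNReal.ofReal ((((z + u : ℤ) : ℝ) + ((n + 1 : ℕ) : ℝ)) ^ 2)
            * (stepA μ z * (stepA μ ^ n) u) := by
          refine tsum_congr fun z => ?_
          rw [← (Equiv.addLeft z).tsum_eq]
          refine tsum_congr fun u => ?_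
          simp [Equiv.coe_addLeft, add_sub_cancel_left]
      _ = ∑' (z : ℤ) (u : ℤ),
            ((ENNReal.ofReal (((z : ℝ) + 1) ^ 2) * stepA μ z) * (stepA μ ^ n) u
            + ((2 * (ENNReal.ofReal ((z : ℝ) + 1) * stepA μ z))
                * (ENNReal.ofReal ((u : ℝ) + (n : ℝ)) * (stepA μ ^ n) u)
              + stepA μ z * (ENNReal.ofReal (((u : ℝ) + (n : ℝ)) ^ 2) * (stepA μ ^ n) u))) := by
          refine tsum_congr fun z => tsum_congr fun u => ?_
          rcases eq_or_ne (stepA μ z) 0 with hs | hs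
          · simp [hs]
          rcases eq_or_ne ((stepA μ ^ n) u) 0 with hw | hw
          · simp [hw]
          have hz : (-1 : ℤ) ≤ z := by
            by_contra h; exact hs (stepA_neg μ z (by omega))
          have hu : -(n : ℤ) ≤ u := by
            by_contra h; exact hw (walk_supp μ n u (by omega))
          have hz' : (0 : ℝ) ≤ (z : ℝ) + 1 := by exact_mod_cast by omega
          have hu' : (0 : ℝ) ≤ (u : ℝ) + (n : ℝ) := by
            exact_mod_cast (by omega : (0 : ℤ) ≤ u + (n : ℤ))
          rw [show ((z + u : ℤ) : ℝ) + ((n + 1 : ℕ) : ℝ) = ((z : ℝ) + 1) + ((u : ℝ) + (n : ℝ))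
              by push_cast; ring]
          rw [show (((z : ℝ) + 1) + ((u : ℝ) + (n : ℝ))) ^ 2
              = ((z : ℝ) + 1) ^ 2 + (2 * ((z : ℝ) + 1) * ((u : ℝ) + (n : ℝ))
                + ((u : ℝ) + (n : ℝ)) ^ 2) by ring]
          rw [ENNReal.ofReal_add (by positivity) (by positivity),
            ENNReal.ofReal_add (by positivity) (by positivity),
            show 2 * ((z : ℝ) + 1) * ((u : ℝ) + (n : ℝ)) = (2 * ((z : ℝ) + 1)) * ((u : ℝ) + (n : ℝ))
              by ring,
            ENNReal.ofReal_mul (by positivity),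
            ENNReal.ofReal_mul (by norm_num : (0:ℝ) ≤ 2), ENNReal.ofReal_ofNat]
          ring
      _ = (∑' z : ℤ, ENNReal.ofReal (((z : ℝ) + 1) ^ 2) * stepA μ z)
              * (∑' u : ℤ, (stepA μ ^ n) u)
            + ((∑' z : ℤ, 2 * (ENNReal.ofReal ((z : ℝ) + 1) * stepA μ z))
                * (∑' u : ℤ, ENNReal.ofReal ((u : ℝ) + (n : ℝ)) * (stepA μ ^ n) u)
              + (∑' z : ℤ, stepA μ z)
                * (∑' u : ℤ, ENNReal.ofReal (((u : ℝ) + (n : ℝ)) ^ 2) * (stepA μ ^ n) u)) := by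
          erw [tsum_tsum_add, tsum_tsum_add, tsum_tsum_factor, tsum_tsum_factor, tsum_tsum_factor]
      _ = ((n + 1 : ℕ) : ℝ≥0∞) * ENNReal.ofReal σ2 + ((n + 1 : ℕ) : ℝ≥0∞) ^ 2 := by
          rw [sm_stepA μ σ2 hμ hmean hvar, mass_walk μ hμ n, ENNReal.tsum_mul_left,
            fm_stepA μ hmean, fm_walk μ hμ hmean n, tsum_stepA μ hμ, ih]
          push_cast
          ring

lemma sm_walk (hμ : ∑' k, μ k = 1) (hmean : ∑' k : ℕ, (k : ℝ≥0∞) * μ k = 1)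
    (hvar : ∑' k : ℕ, ENNReal.ofReal (((k : ℝ) - 1) ^ 2) * μ k = ENNReal.ofReal σ2) (n : ℕ) :
    ∑' z : ℤ, ENNReal.ofReal ((z : ℝ) ^ 2) * (stepA μ ^ n) z = (n : ℝ≥0∞) * ENNReal.ofReal σ2 := by
  have key : ∑' z : ℤ, (ENNReal.ofReal ((z : ℝ) ^ 2)
        + 2 * (n : ℝ≥0∞) * ENNReal.ofReal ((z : ℝ) + (n : ℝ))) * (stepA μ ^ n) z
      = ∑' z : ℤ, (ENNReal.ofReal (((z : ℝ) + (n : ℝ)) ^ 2) + (n : ℝ≥0∞) ^ 2)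
          * (stepA μ ^ n) z := by
    refine tsum_congr fun z => ?_
    rcases eq_or_ne ((stepA μ ^ n) z) 0 with hw | hw
    · simp [hw]
    have hzn : -(n : ℤ) ≤ z := by
      by_contra h; exact hw (walk_supp μ n z (by omega))
    have hz' : (0 : ℝ) ≤ (z : ℝ) + (n : ℝ) := by
      exact_mod_cast (by omega : (0 : ℤ) ≤ z + (n : ℤ))
    congr 1
    have e1 : 2 * (n : ℝ≥0∞) * ENNReal.ofReal ((z : ℝ) + (n : ℝ))
        = ENNReal.ofReal (2 * (n : ℝ) * ((z : ℝ) + (n : ℝ))) := by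
      rw [ENNReal.ofReal_mul (by positivity), ENNReal.ofReal_mul (by norm_num : (0:ℝ) ≤ 2),
        ENNReal.ofReal_ofNat, ENNReal.ofReal_natCast]
    have e2 : ((n : ℝ≥0∞)) ^ 2 = ENNReal.ofReal ((n : ℝ) ^ 2) := by
      rw [ENNReal.ofReal_pow (by positivity), ENNReal.ofReal_natCast]
    rw [e1, e2, ← ENNReal.ofReal_add (by positivity) (by positivity),
      ← ENNReal.ofReal_add (by positivity) (by positivity)]
    congr 1
    ring
  have expand : ∀ (A B : ℤ → ℝ≥0∞), (∑' z : ℤ, (A z + B z) * (stepA μ ^ n) z)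
      = (∑' z : ℤ, A z * (stepA μ ^ n) z) + ∑' z : ℤ, B z * (stepA μ ^ n) z := by
    intro A B
    rw [← ENNReal.tsum_add]
    exact tsum_congr fun z => add_mul _ _ _
  rw [expand, expand] at key
  have h1 : ∑' z : ℤ, (2 * (n : ℝ≥0∞) * ENNReal.ofReal ((z : ℝ) + (n : ℝ))) * (stepA μ ^ n) z
      = 2 * (n : ℝ≥0∞) * (n : ℝ≥0∞) := by
    simp_rw [mul_assoc]
    rw [ENNReal.tsum_mul_left, ENNReal.tsum_mul_left, fm_walk μ hμ hmean n, ← mul_assoc]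
  have h2 : ∑' z : ℤ, ((n : ℝ≥0∞) ^ 2) * (stepA μ ^ n) z = (n : ℝ≥0∞) ^ 2 := by
    erw [ENNReal.tsum_mul_left, mass_walk μ hμ n, mul_one]
  rw [h1, h2, sm'_walk μ σ2 hμ hmean hvar n] at key
  have hfin : (2 * (n : ℝ≥0∞) * (n : ℝ≥0∞)) ≠ ⊤ := by
    finiteness
  have key2 : (∑' z : ℤ, ENNReal.ofReal ((z : ℝ) ^ 2) * (stepA μ ^ n) z)
        + 2 * (n : ℝ≥0∞) * (n : ℝ≥0∞)
      = (n : ℝ≥0∞) * ENNReal.ofReal σ2 + 2 * (n : ℝ≥0∞) * (n : ℝ≥0∞) := by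
    rw [key]
    ring
  exact (ENNReal.add_left_inj hfin).mp key2

lemma tail_walk (hμ : ∑' k, μ k = 1) (hmean : ∑' k : ℕ, (k : ℝ≥0∞) * μ k = 1)
    (hvar : ∑' k : ℕ, ENNReal.ofReal (((k : ℝ) - 1) ^ 2) * μ k = ENNReal.ofReal σ2)
    (n : ℕ) (x : ℕ) (hx : 1 ≤ x) :
    (x : ℝ≥0∞) ^ 2 * (∑' z : ℤ, if (x : ℤ) ≤ 2 * z then (stepA μ ^ n) z else 0)
      ≤ 4 * (n : ℝ≥0∞) * ENNReal.ofReal σ2 := by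
  rw [← ENNReal.tsum_mul_left]
  have hle : ∀ z : ℤ, (x : ℝ≥0∞) ^ 2 * (if (x : ℤ) ≤ 2 * z then (stepA μ ^ n) z else 0)
      ≤ 4 * (ENNReal.ofReal ((z : ℝ) ^ 2) * (stepA μ ^ n) z) := by
    intro z
    by_cases h : (x : ℤ) ≤ 2 * z
    · rw [if_pos h]
      have hxz : ((x : ℝ)) ^ 2 ≤ 4 * (z : ℝ) ^ 2 := by
        have h1 : (x : ℝ) ≤ 2 * (z : ℝ) := by exact_mod_cast h
        have h0 : (0 : ℝ) ≤ (x : ℝ) := by positivity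
        nlinarith
      calc (x : ℝ≥0∞) ^ 2 * (stepA μ ^ n) z
          = ENNReal.ofReal ((x : ℝ) ^ 2) * (stepA μ ^ n) z := by
            rw [ENNReal.ofReal_pow (by positivity), ENNReal.ofReal_natCast]
        _ ≤ ENNReal.ofReal (4 * (z : ℝ) ^ 2) * (stepA μ ^ n) z :=
            mul_le_mul_left (ENNReal.ofReal_le_ofReal hxz) _
        _ = 4 * (ENNReal.ofReal ((z : ℝ) ^ 2) * (stepA μ ^ n) z) := by
            rw [ENNReal.ofReal_mul (by norm_num : (0:ℝ) ≤ 4)]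
            norm_num [mul_assoc]
    · rw [if_neg h, mul_zero]
      exact zero_le
  calc ∑' z : ℤ, (x : ℝ≥0∞) ^ 2 * (if (x : ℤ) ≤ 2 * z then (stepA μ ^ n) z else 0)
      ≤ ∑' z : ℤ, 4 * (ENNReal.ofReal ((z : ℝ) ^ 2) * (stepA μ ^ n) z) :=
        ENNReal.tsum_le_tsum hle
    _ = 4 * ((n : ℝ≥0∞) * ENNReal.ofReal σ2) := by
        rw [ENNReal.tsum_mul_left, sm_walk μ σ2 hμ hmean hvar n]
    _ = 4 * (n : ℝ≥0∞) * ENNReal.ofReal σ2 := by ring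

end AuxMoments
noncomputable section AuxConc
open ConvAlg

lemma centralBinom_sq_bound : ∀ j : ℕ, Nat.centralBinom j ^ 2 * (3*j+1) ≤ 16 ^ j := by
  intro j
  induction j with
  | zero => simp [Nat.centralBinom]
  | succ n ih =>
    have key := Nat.succ_mul_centralBinom_succ n
    have hpos : 0 < (n+1)^2 * (3*n+1) := by positivity
    refine Nat.le_of_mul_le_mul_left ?_ hpos
    calc ((n+1)^2*(3*n+1)) * (Nat.centralBinom (n+1) ^ 2 * (3*(n+1)+1))
        = ((n+1) * Nat.centralBinom (n+1))^2 * ((3*n+1)*(3*n+4)) := by ring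
      _ = (2*(2*n+1)*Nat.centralBinom n)^2 * ((3*n+1)*(3*n+4)) := by rw [key]
      _ = (4*(2*n+1)^2*(3*n+4)) * (Nat.centralBinom n ^ 2 * (3*n+1)) := by ring
      _ ≤ (4*(2*n+1)^2*(3*n+4)) * 16^n := Nat.mul_le_mul_left _ ih
      _ ≤ (16*(n+1)^2*(3*n+1)) * 16^n := Nat.mul_le_mul_right _ (by nlinarith)
      _ = ((n+1)^2*(3*n+1)) * 16^(n+1) := by ring

lemma middle_sq_bound (m : ℕ) : (m.choose (m/2))^2 * (m+1) ≤ 2 * 4^m := by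
  rcases Nat.even_or_odd m with ⟨j, hj⟩ | ⟨j, hj⟩
  · subst hj
    have h2 : (j + j) / 2 = j := by omega
    have hc : (j+j).choose j = Nat.centralBinom j := by
      rw [Nat.centralBinom]; congr 1; omega
    rw [h2, hc]
    calc Nat.centralBinom j ^ 2 * (j + j + 1) ≤ Nat.centralBinom j ^ 2 * (3*j+1) := by
          apply Nat.mul_le_mul_left; omega
      _ ≤ 16 ^ j := centralBinom_sq_bound j
      _ ≤ 2 * 4 ^ (j + j) := by
          rw [show (16:ℕ)^j = 4^(j+j) by rw [pow_add, show (16:ℕ) = 4*4 by norm_num, mul_pow]]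
          omega
  · subst hj
    have h2 : (2*j + 1) / 2 = j := by omega
    rw [h2]
    have hc : 2 * ((2*j+1).choose j) = Nat.centralBinom (j+1) := by
      rw [Nat.centralBinom, show 2*(j+1) = (2*j+1)+1 by ring, Nat.choose_succ_succ',
        Nat.choose_symm_half]
      ring
    refine Nat.le_of_mul_le_mul_left ?_ (show 0 < 4 by norm_num)
    calc 4 * ((2*j+1).choose j ^ 2 * (2*j+1+1))
        = (2 * ((2*j+1).choose j))^2 * (2*j+2) := by ring
      _ = Nat.centralBinom (j+1) ^ 2 * (2*j+2) := by rw [hc]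
      _ ≤ Nat.centralBinom (j+1) ^ 2 * (3*(j+1)+1) := by apply Nat.mul_le_mul_left; omega
      _ ≤ 16 ^ (j+1) := centralBinom_sq_bound (j+1)
      _ ≤ 4 * (2 * 4 ^ (2*j+1)) := by
          rw [show (16:ℕ)^(j+1) = 16 * 16^j by ring, show (4:ℕ)^(2*j+1) = 4 * 16^j by
            rw [pow_succ', pow_mul]; norm_num]
          omega

lemma two_mul_le_sq_add' (u v : ℝ≥0∞) (h : u ≤ v) : 2*(u*v) ≤ u^2 + v^2 := by
  obtain ⟨d, rfl⟩ : ∃ d, v = u + d := ⟨v - u, by rw [add_tsub_cancel_of_le h]⟩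
  have he : u^2 + (u+d)^2 = (2*(u*(u+d))) + d^2 := by ring
  rw [he]
  exact self_le_add_right _ _

lemma two_mul_le_sq_add (u v : ℝ≥0∞) : 2*(u*v) ≤ u^2 + v^2 := by
  rcases le_total u v with h | h
  · exact two_mul_le_sq_add' u v h
  · rw [mul_comm u v, add_comm (u^2)]
    exact two_mul_le_sq_add' v u h

lemma ennreal_le_of_sq_le_sq (a b : ℝ≥0∞) (h : a^2 ≤ b^2) : a ≤ b := by
  by_contra hlt
  push_neg at hlt
  exact absurd h (not_le.mpr (ENNReal.pow_lt_pow_left (by norm_num) hlt))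

lemma amgm_bound (X u v : ℝ≥0∞) (h : X^2 ≤ 4*(u*v)) : X ≤ u + v := by
  refine ennreal_le_of_sq_le_sq _ _ (h.trans ?_)
  rw [add_sq]
  calc 4*(u*v) = 2*(u*v) + 2*(u*v) := by ring
    _ ≤ (u^2 + v^2) + 2*(u*v) := add_le_add_left (two_mul_le_sq_add u v) _
    _ = u ^ 2 + 2 * u * v + v ^ 2 := by ring

lemma einv_bound (q r : ℝ≥0∞) (hqr : q + r = 1) (n : ℕ) :
    ∑ m ∈ Finset.range (n+1),
        q ^ m * r ^ (n-m) * (n.choose m : ℝ≥0∞) * (((m+1 : ℕ) : ℝ≥0∞))⁻¹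
      ≤ (((n+1 : ℕ) : ℝ≥0∞))⁻¹ * q⁻¹ := by
  have hmul : (((n+1 : ℕ) : ℝ≥0∞))⁻¹ * q⁻¹ = (((n+1 : ℕ) : ℝ≥0∞) * q)⁻¹ := by
    rw [ENNReal.mul_inv (Or.inl (by exact_mod_cast Nat.succ_ne_zero n))
      (Or.inl (ENNReal.natCast_ne_top _))]
  rw [hmul, ENNReal.le_inv_iff_mul_le]
  calc (∑ m ∈ Finset.range (n+1),
          q ^ m * r ^ (n-m) * (n.choose m : ℝ≥0∞) * (((m+1 : ℕ) : ℝ≥0∞))⁻¹)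
        * (((n+1 : ℕ) : ℝ≥0∞) * q)
      = ∑ m ∈ Finset.range (n+1),
          q ^ (m+1) * r ^ (n-m) * ((((n+1 : ℕ) : ℝ≥0∞) * (n.choose m : ℝ≥0∞))
            * (((m+1 : ℕ) : ℝ≥0∞))⁻¹) := by
        rw [Finset.sum_mul]
        refine Finset.sum_congr rfl fun m _ => ?_
        ring
    _ = ∑ m ∈ Finset.range (n+1), q ^ (m+1) * r ^ (n-m) * ((n+1).choose (m+1) : ℝ≥0∞) := by
        refine Finset.sum_congr rfl fun m _ => ?_
        congr 1
        have hnat : (n+1) * (n.choose m) = (n+1).choose (m+1) * (m+1) := by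
          exact_mod_cast Nat.add_one_mul_choose_eq n m
        have : ((n+1 : ℕ) : ℝ≥0∞) * (n.choose m : ℝ≥0∞)
            = ((n+1).choose (m+1) : ℝ≥0∞) * ((m+1 : ℕ) : ℝ≥0∞) := by
          exact_mod_cast congrArg (Nat.cast (R := ℝ≥0∞)) hnat
        rw [this, mul_assoc, ENNReal.mul_inv_cancel (by exact_mod_cast Nat.succ_ne_zero m)
          (ENNReal.natCast_ne_top _), mul_one]
    _ ≤ ∑ i ∈ Finset.range (n+2), q ^ i * r ^ (n+1-i) * ((n+1).choose i : ℝ≥0∞) := by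
        rw [Finset.sum_range_succ' (fun i => q ^ i * r ^ (n+1-i) * ((n+1).choose i : ℝ≥0∞)) (n+1)]
        refine le_add_right (le_of_eq (Finset.sum_congr rfl fun m _ => ?_))
        have h1 : n + 1 - (m+1) = n - m := by omega
        rw [h1]
    _ = (q + r) ^ (n+1) := (add_pow q r (n+1)).symm
    _ = 1 := by rw [hqr, one_pow]

section Kappa

variable (μ : ℕ → ℝ≥0∞) (a b : ℕ) (p : ℝ≥0∞)

def kap : ConvAlg := delta ((a:ℤ)-1) p + delta ((b:ℤ)-1) p

def nuA : ConvAlg := fun z => stepA μ z - kap a b p z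

variable (hab : a ≠ b) (hpa : p ≤ μ a) (hpb : p ≤ μ b)

include hab hpa hpb in
lemma kap_le_step : ∀ z, kap a b p z ≤ stepA μ z := by
  intro z
  rw [kap, add_apply, delta_apply, delta_apply]
  by_cases hza : z = (a:ℤ)-1
  · rw [if_pos hza, if_neg (by omega), add_zero, hza,
      show (a:ℤ)-1 = ((a:ℕ):ℤ)-1 from rfl, stepA_nat]
    exact hpa
  · rw [if_neg hza, zero_add]
    by_cases hzb : z = (b:ℤ)-1
    · rw [if_pos hzb, hzb, show (b:ℤ)-1 = ((b:ℕ):ℤ)-1 from rfl, stepA_nat]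
      exact hpb
    · rw [if_neg hzb]
      exact zero_le

include hab hpa hpb in
lemma kap_add_nu : kap a b p + nuA μ a b p = stepA μ := by
  funext z
  rw [add_apply, nuA, add_tsub_cancel_of_le (kap_le_step μ a b p hab hpa hpb z)]

lemma mass_kap : mass (kap a b p) = p + p := by
  rw [kap, mass_add, mass_delta, mass_delta]

include hab in
lemma kap_pow_le (m : ℕ) (y : ℤ) :
    (kap a b p ^ m) y ≤ p^m * ((m.choose (m/2) : ℕ) : ℝ≥0∞) := by
  classical
  rw [kap, add_pow, sum_apply]
  have hterm : ∀ j ∈ Finset.range (m+1),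
      (delta ((a:ℤ)-1) p ^ j * delta ((b:ℤ)-1) p ^ (m-j) * ((m.choose j : ℕ) : ConvAlg)) y
        = if y = (j:ℤ)*((a:ℤ)-1) + ((m:ℤ)-(j:ℤ))*((b:ℤ)-1)
            then p^m * ((m.choose j : ℕ) : ℝ≥0∞) else 0 := by
    intro j hj
    have hjm : j ≤ m := by
      have := Finset.mem_range.mp hj; omega
    rw [delta_pow, delta_pow, delta_mul_delta, natCast_eq_delta, delta_mul_delta, delta_apply]
    rw [show p^j * p^(m-j) = p^m by rw [← pow_add, Nat.add_sub_cancel' hjm]]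
    have hcast : ((m - j : ℕ) : ℤ) = (m:ℤ) - (j:ℤ) := by omega
    rw [hcast, add_zero]
  rw [Finset.sum_congr rfl hterm, ← Finset.sum_filter]
  have hcard : (Finset.filter
      (fun j : ℕ => y = (j:ℤ)*((a:ℤ)-1) + ((m:ℤ)-(j:ℤ))*((b:ℤ)-1)) (Finset.range (m+1))).card
        ≤ 1 := by
    refine Finset.card_le_one.mpr fun j1 h1 j2 h2 => ?_
    have e1 := (Finset.mem_filter.mp h1).2
    have e2 := (Finset.mem_filter.mp h2).2
    have hab' : ((a:ℕ):ℤ) ≠ ((b:ℕ):ℤ) := by exact_mod_cast hab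
    have hkey : ((j1:ℤ) - (j2:ℤ)) * ((a:ℤ) - (b:ℤ)) = 0 := by linarith [e1, e2]
    rcases mul_eq_zero.mp hkey with h | h
    · omega
    · omega
  calc ∑ j ∈ Finset.filter
        (fun j : ℕ => y = (j:ℤ)*((a:ℤ)-1) + ((m:ℤ)-(j:ℤ))*((b:ℤ)-1)) (Finset.range (m+1)),
        p^m * ((m.choose j : ℕ) : ℝ≥0∞)
      ≤ ∑ _j ∈ Finset.filter
          (fun j : ℕ => y = (j:ℤ)*((a:ℤ)-1) + ((m:ℤ)-(j:ℤ))*((b:ℤ)-1)) (Finset.range (m+1)),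
          p^m * ((m.choose (m/2) : ℕ) : ℝ≥0∞) := by
        refine Finset.sum_le_sum fun j _ => ?_
        exact mul_le_mul_right (by exact_mod_cast Nat.choose_le_middle j m) _
    _ = (Finset.filter
          (fun j : ℕ => y = (j:ℤ)*((a:ℤ)-1) + ((m:ℤ)-(j:ℤ))*((b:ℤ)-1)) (Finset.range (m+1))).card
          • (p^m * ((m.choose (m/2) : ℕ) : ℝ≥0∞)) := by
        rw [Finset.sum_const]
    _ ≤ 1 * (p^m * ((m.choose (m/2) : ℕ) : ℝ≥0∞)) := by
        rw [nsmul_eq_mul]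
        exact mul_le_mul_left (by exact_mod_cast hcard) _
    _ = p^m * ((m.choose (m/2) : ℕ) : ℝ≥0∞) := one_mul _

end Kappa
end AuxConc
noncomputable section AuxQ
open ConvAlg

lemma natcast_mul_apply (F : ConvAlg) (N : ℕ) (x : ℤ) :
    (F * (N : ConvAlg)) x = (N : ℝ≥0∞) * F x := by
  rw [mul_comm, natCast_eq_delta, delta_zero_mul]

lemma sqrt_succ_sq_le (n : ℕ) : (Nat.sqrt n + 1)^2 ≤ 2*(n+1) := by
  have h := Nat.sqrt_le' n
  nlinarith [Nat.sqrt_le' n]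

lemma per_term (p t : ℝ≥0∞) (ht0 : t ≠ 0) (httop : t ≠ ⊤) (j : ℕ) :
    p^j * ((j.choose (j/2) : ℕ) : ℝ≥0∞) ≤ (p+p)^j * (t * 2⁻¹)
      + (p+p)^j * ((((j+1 : ℕ) : ℝ≥0∞))⁻¹ * t⁻¹) := by
  apply amgm_bound
  have htt : t * t⁻¹ = 1 := ENNReal.mul_inv_cancel ht0 httop
  have hjj : ((j+1:ℕ):ℝ≥0∞) * (((j+1:ℕ):ℝ≥0∞))⁻¹ = 1 :=
    ENNReal.mul_inv_cancel (by exact_mod_cast Nat.succ_ne_zero j) (ENNReal.natCast_ne_top _)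
  have hq2 : (p+p)^j * (p+p)^j = 4^j * (p^j * p^j) := by
    calc (p+p)^j * (p+p)^j = ((2:ℝ≥0∞)^j*p^j)*((2:ℝ≥0∞)^j*p^j) := by
          rw [show p+p = 2*p by ring, mul_pow]
      _ = ((2:ℝ≥0∞)*2)^j*(p^j*p^j) := by rw [mul_pow]; ring
      _ = 4^j*(p^j*p^j) := by norm_num
  have hmb' : (((j.choose (j/2)) : ℝ≥0∞))^2 * ((j+1 : ℕ) : ℝ≥0∞) ≤ 2 * 4^j := by
    exact_mod_cast middle_sq_bound j
  have huv : 4 * (((p+p)^j * (t * 2⁻¹)) * ((p+p)^j * ((((j+1:ℕ):ℝ≥0∞))⁻¹ * t⁻¹)))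
      = (2 * ((p+p)^j*(p+p)^j)) * (((j+1:ℕ):ℝ≥0∞))⁻¹ := by
    have h42 : (4:ℝ≥0∞) * 2⁻¹ = 2 := by
      rw [show (4:ℝ≥0∞) = 2*2 by norm_num, mul_assoc,
        ENNReal.mul_inv_cancel two_ne_zero ENNReal.ofNat_ne_top, mul_one]
    calc 4 * (((p+p)^j * (t * 2⁻¹)) * ((p+p)^j * ((((j+1:ℕ):ℝ≥0∞))⁻¹ * t⁻¹)))
        = ((4:ℝ≥0∞) * 2⁻¹) * (t * t⁻¹) * ((p+p)^j*(p+p)^j) * (((j+1:ℕ):ℝ≥0∞))⁻¹ := by ring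
      _ = (2 * ((p+p)^j*(p+p)^j)) * (((j+1:ℕ):ℝ≥0∞))⁻¹ := by rw [h42, htt]; ring
  rw [huv]
  calc (p^j * ((j.choose (j/2) : ℕ) : ℝ≥0∞))^2
      = ((((j.choose (j/2)) : ℝ≥0∞))^2 * ((j+1:ℕ):ℝ≥0∞) * (p^j*p^j)) * (((j+1:ℕ):ℝ≥0∞))⁻¹ := by
        rw [show (((j.choose (j/2)) : ℝ≥0∞))^2 * ((j+1:ℕ):ℝ≥0∞) * (p^j*p^j) * (((j+1:ℕ):ℝ≥0∞))⁻¹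
          = (((j.choose (j/2)) : ℝ≥0∞))^2 * (p^j*p^j) * (((j+1:ℕ):ℝ≥0∞) * (((j+1:ℕ):ℝ≥0∞))⁻¹)
          by ring, hjj, mul_one]
        ring
    _ ≤ ((2 * 4^j) * (p^j*p^j)) * (((j+1:ℕ):ℝ≥0∞))⁻¹ := by
        refine mul_le_mul_left (mul_le_mul_left hmb' _) _
    _ = (2 * ((p+p)^j*(p+p)^j)) * (((j+1:ℕ):ℝ≥0∞))⁻¹ := by rw [hq2]; ring

section QB
variable (μ : ℕ → ℝ≥0∞) (a b : ℕ) (p : ℝ≥0∞)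
variable (hab : a ≠ b) (hpa : p ≤ μ a) (hpb : p ≤ μ b) (hμ : ∑' k, μ k = 1)

include hab hpa hpb hμ in
lemma Qbound (n : ℕ) (x : ℤ) :
    (stepA μ ^ n) x ≤ (2⁻¹ + 2 * (p+p)⁻¹) * (((Nat.sqrt n + 1 : ℕ) : ℝ≥0∞))⁻¹ := by
  set q : ℝ≥0∞ := p + p with hqdef
  set r : ℝ≥0∞ := mass (nuA μ a b p) with hrdef
  set c : ℝ≥0∞ := ((Nat.sqrt n + 1 : ℕ) : ℝ≥0∞) with hcdef
  have hc0 : c ≠ 0 := by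
    rw [hcdef]
    exact Nat.cast_ne_zero.mpr (by omega)
  have hctop : c ≠ ⊤ := ENNReal.natCast_ne_top _
  set t : ℝ≥0∞ := c⁻¹ with htdef
  have ht0 : t ≠ 0 := ENNReal.inv_ne_zero.mpr hctop
  have httop : t ≠ ⊤ := ENNReal.inv_ne_top.mpr hc0
  have hqr : q + r = 1 := by
    have h1 : mass (kap a b p + nuA μ a b p) = 1 := by
      rw [kap_add_nu μ a b p hab hpa hpb]; exact mass_stepA μ hμ
    rw [mass_add, mass_kap] at h1
    exact h1
  have hsum1 : ∑ j ∈ Finset.range (n+1), q ^ j * r ^ (n-j) * ((n.choose j : ℕ) : ℝ≥0∞) = 1 := by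
    rw [← add_pow q r n, hqr, one_pow]
  calc (stepA μ ^ n) x
      = ((kap a b p + nuA μ a b p) ^ n) x := by rw [kap_add_nu μ a b p hab hpa hpb]
    _ = ∑ j ∈ Finset.range (n+1),
          (kap a b p ^ j * nuA μ a b p ^ (n-j) * ((n.choose j : ℕ) : ConvAlg)) x := by
        rw [add_pow, sum_apply]
    _ ≤ ∑ j ∈ Finset.range (n+1),
          ((n.choose j : ℕ) : ℝ≥0∞) * ((q^j * (t * 2⁻¹) + q^j * ((((j+1 : ℕ) : ℝ≥0∞))⁻¹ * t⁻¹))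
            * r^(n-j)) := by
        refine Finset.sum_le_sum fun j _ => ?_
        rw [natcast_mul_apply]
        refine mul_le_mul_right ?_ _
        calc (kap a b p ^ j * nuA μ a b p ^ (n-j)) x
            ≤ (p^j * ((j.choose (j/2) : ℕ) : ℝ≥0∞)) * mass (nuA μ a b p ^ (n-j)) :=
              mul_apply_le_of_le _ _ _ (kap_pow_le a b p hab j) x
          _ = (p^j * ((j.choose (j/2) : ℕ) : ℝ≥0∞)) * r^(n-j) := by rw [mass_pow]
          _ ≤ (q^j * (t * 2⁻¹) + q^j * ((((j+1 : ℕ) : ℝ≥0∞))⁻¹ * t⁻¹)) * r^(n-j) :=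
              mul_le_mul_left (per_term p t ht0 httop j) _
    _ = (t * 2⁻¹) * (∑ j ∈ Finset.range (n+1), q ^ j * r ^ (n-j) * ((n.choose j : ℕ) : ℝ≥0∞))
        + t⁻¹ * (∑ j ∈ Finset.range (n+1),
            q ^ j * r ^ (n-j) * ((n.choose j : ℕ) : ℝ≥0∞) * (((j+1 : ℕ) : ℝ≥0∞))⁻¹) := by
        rw [Finset.mul_sum, Finset.mul_sum, ← Finset.sum_add_distrib]
        refine Finset.sum_congr rfl fun j _ => ?_
        ring
    _ ≤ (t * 2⁻¹) * 1 + t⁻¹ * ((((n+1 : ℕ) : ℝ≥0∞))⁻¹ * q⁻¹) := by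
        refine add_le_add (mul_le_mul_right (le_of_eq hsum1) _)
          (mul_le_mul_right (einv_bound q r hqr n) _)
    _ ≤ t * 2⁻¹ + t * (2 * q⁻¹) := by
        rw [mul_one]
        refine add_le_add_right ?_ _
        have hinv : t⁻¹ = c := by rw [htdef, inv_inv]
        have hcc : c * c ≤ 2 * ((n+1 : ℕ) : ℝ≥0∞) := by
          have hnat := sqrt_succ_sq_le n
          calc c * c = (((Nat.sqrt n + 1)^2 : ℕ) : ℝ≥0∞) := by rw [hcdef]; push_cast; ring
            _ ≤ ((2*(n+1) : ℕ) : ℝ≥0∞) := by exact_mod_cast hnat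
            _ = 2 * ((n+1 : ℕ) : ℝ≥0∞) := by push_cast; ring
        have hn1 : (((n+1 : ℕ) : ℝ≥0∞))⁻¹ ≤ 2 * (c*c)⁻¹ := by
          have h1 : (2 * (((n+1 : ℕ) : ℝ≥0∞)))⁻¹ ≤ (c*c)⁻¹ := ENNReal.inv_le_inv.mpr hcc
          have h2 : 2 * (2 * (((n+1 : ℕ) : ℝ≥0∞)))⁻¹ ≤ 2 * (c*c)⁻¹ := mul_le_mul_right h1 _
          calc (((n+1 : ℕ) : ℝ≥0∞))⁻¹
              = 2 * (2 * (((n+1 : ℕ) : ℝ≥0∞)))⁻¹ := by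
                rw [ENNReal.mul_inv (Or.inl two_ne_zero) (Or.inl ENNReal.ofNat_ne_top),
                  ← mul_assoc, ENNReal.mul_inv_cancel two_ne_zero ENNReal.ofNat_ne_top, one_mul]
            _ ≤ 2 * (c*c)⁻¹ := h2
        calc t⁻¹ * ((((n+1 : ℕ) : ℝ≥0∞))⁻¹ * q⁻¹)
            = (c * (((n+1 : ℕ) : ℝ≥0∞))⁻¹) * q⁻¹ := by rw [hinv]; ring
          _ ≤ (c * (2 * (c*c)⁻¹)) * q⁻¹ := by
              exact mul_le_mul_left (mul_le_mul_right hn1 _) _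
          _ = (2 * (c * c⁻¹) * c⁻¹) * q⁻¹ := by
              rw [ENNReal.mul_inv (Or.inl hc0) (Or.inl hctop)]
              ring
          _ = t * (2 * q⁻¹) := by
              rw [ENNReal.mul_inv_cancel hc0 hctop, mul_one, htdef]
              ring
    _ = (2⁻¹ + 2 * q⁻¹) * t := by ring

end QB
end AuxQ
lemma nat_le_mul_of_sq (u v l : ℕ) (hu : l ≤ u*u) (hv : l ≤ v*v) : l ≤ u*v := by
  by_contra h
  push_neg at h
  have h1 : l*l ≤ (u*u)*(v*v) := Nat.mul_le_mul hu hv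
  have h2 : (u*v)*(u*v) < l*l := Nat.mul_lt_mul_of_lt_of_le h (le_of_lt h) (by omega)
  nlinarith

theorem sup_x_mul_walkProb_lt_top' (μ : ℕ → ℝ≥0∞) (σ2 : ℝ)
    (hμ : ∑' k, μ k = 1)
    (hmean : ∑' k : ℕ, (k : ℝ≥0∞) * μ k = 1)
    (hvar : ∑' k : ℕ, ENNReal.ofReal (((k : ℝ) - 1) ^ 2) * μ k = ENNReal.ofReal σ2)
    (hσpos : 0 < σ2) :
    ∃ C : ℝ≥0∞, C < ⊤ ∧ ∀ n : ℕ, 1 ≤ n → ∀ x : ℕ, (x : ℝ≥0∞) * walkProb μ n (x : ℤ) ≤ C := by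
  classical
  -- two distinct support points
  have hex : ∃ k, k ≠ 1 ∧ μ k ≠ 0 := by
    by_contra h
    push_neg at h
    have h0 : ∑' k : ℕ, ENNReal.ofReal (((k : ℝ) - 1) ^ 2) * μ k = 0 := by
      refine ENNReal.tsum_eq_zero.mpr fun k => ?_
      rcases eq_or_ne k 1 with rfl | hk
      · norm_num
      · rw [h k hk, mul_zero]
    rw [hvar] at h0
    have := ENNReal.ofReal_eq_zero.mp h0
    linarith
  obtain ⟨a, hane1, ha0⟩ := hex
  have hex2 : ∃ j, j ≠ a ∧ μ j ≠ 0 := by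
    by_contra h
    push_neg at h
    have h1 : ∑' k, μ k = μ a := tsum_eq_single a (fun b hb => h b hb)
    have hμa : μ a = 1 := by rw [← h1, hμ]
    have h2 : ∑' k : ℕ, (k : ℝ≥0∞) * μ k = (a : ℝ≥0∞) * μ a :=
      tsum_eq_single a (fun b hb => by rw [h b hb, mul_zero])
    rw [hmean, hμa, mul_one] at h2
    exact hane1 (by exact_mod_cast h2.symm)
  obtain ⟨b, hbnea, hb0⟩ := hex2
  have hab : a ≠ b := fun h => hbnea h.symm
  set p : ℝ≥0∞ := min (μ a) (μ b) with hpdef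
  have hp0 : p ≠ 0 := by
    intro h
    rw [hpdef] at h
    rcases le_total (μ a) (μ b) with hle | hle
    · exact ha0 (by rwa [min_eq_left hle] at h)
    · exact hb0 (by rwa [min_eq_right hle] at h)
  have hpa : p ≤ μ a := min_le_left _ _
  have hpb : p ≤ μ b := min_le_right _ _
  set K1 : ℝ≥0∞ := 2⁻¹ + 2 * (p+p)⁻¹ with hK1def
  have hppne : p + p ≠ 0 := fun h => hp0 (add_eq_zero.mp h).1
  have hK1top : K1 < ⊤ := by
    rw [hK1def]
    apply ENNReal.add_lt_top.mpr
    constructor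
    · exact ENNReal.inv_lt_top.mpr (by norm_num)
    · exact ENNReal.mul_lt_top (by norm_num) (ENNReal.inv_lt_top.mpr (pos_iff_ne_zero.mpr hppne))
  set S : ℝ≥0∞ := ENNReal.ofReal σ2 with hSdef
  have hStop : S < ⊤ := ENNReal.ofReal_lt_top
  refine ⟨K1 + (8 * S * K1 + (S + 1)), ?_, ?_⟩
  · apply ENNReal.add_lt_top.mpr
    refine ⟨hK1top, ENNReal.add_lt_top.mpr ⟨?_, ENNReal.add_lt_top.mpr ⟨hStop, by norm_num⟩⟩⟩
    exact ENNReal.mul_lt_top (ENNReal.mul_lt_top (by norm_num) hStop) hK1top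
  intro n hn x
  rw [walkProb_eq_pow]
  have hQ : ∀ (k : ℕ) (y : ℤ),
      (stepA μ ^ k) y ≤ K1 * (((Nat.sqrt k + 1 : ℕ) : ℝ≥0∞))⁻¹ := fun k y =>
    Qbound μ a b p hab hpa hpb hμ k y
  rcases Nat.eq_zero_or_pos x with rfl | hx1
  · simp
  -- now 1 ≤ x
  rcases eq_or_lt_of_le hn with hn1 | hn2
  · -- n = 1
    rw [← hn1, pow_one]
    have hstep : stepA μ ((x : ℕ) : ℤ) = μ (x+1) := by
      rw [show ((x : ℕ) : ℤ) = ((x+1 : ℕ) : ℤ) - 1 by push_cast; ring, stepA_nat]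
    rw [hstep]
    have hxle : (x : ℝ≥0∞) ≤ ENNReal.ofReal ((x : ℝ) ^ 2) := by
      rw [← ENNReal.ofReal_natCast x]
      apply ENNReal.ofReal_le_ofReal
      have : (1:ℝ) ≤ (x:ℝ) := by exact_mod_cast hx1
      nlinarith
    calc (x : ℝ≥0∞) * μ (x+1)
        ≤ ENNReal.ofReal ((x : ℝ) ^ 2) * μ (x+1) := mul_le_mul_left hxle _
      _ = ENNReal.ofReal ((((x+1 : ℕ) : ℝ) - 1) ^ 2) * μ (x+1) := by
          rw [show (((x+1 : ℕ) : ℝ) - 1) = (x : ℝ) by push_cast; ring]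
      _ ≤ ∑' k : ℕ, ENNReal.ofReal (((k : ℝ) - 1) ^ 2) * μ k := ENNReal.le_tsum (x+1)
      _ = S := hvar
      _ ≤ K1 + (8 * S * K1 + (S + 1)) := by
          calc S ≤ S + 1 := self_le_add_right _ _
            _ ≤ 8 * S * K1 + (S + 1) := self_le_add_left _ _
            _ ≤ K1 + (8 * S * K1 + (S + 1)) := self_le_add_left _ _
  -- n ≥ 2
  set s : ℕ := Nat.sqrt n with hsdef
  rcases le_or_gt x s with hxs | hxs
  · -- small x
    calc (x : ℝ≥0∞) * (stepA μ ^ n) (x : ℤ)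
        ≤ ((s+1 : ℕ) : ℝ≥0∞) * (K1 * (((s + 1 : ℕ) : ℝ≥0∞))⁻¹) := by
          exact mul_le_mul' (by exact_mod_cast (by omega : x ≤ s + 1)) (hQ n _)
      _ = K1 * (((s+1 : ℕ) : ℝ≥0∞) * (((s + 1 : ℕ) : ℝ≥0∞))⁻¹) := by ring
      _ = K1 := by
          rw [ENNReal.mul_inv_cancel (by exact_mod_cast Nat.succ_ne_zero s)
            (ENNReal.natCast_ne_top _), mul_one]
      _ ≤ K1 + (8 * S * K1 + (S + 1)) := self_le_add_right _ _
  -- big x : x ≥ s + 1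
  set m : ℕ := n / 2 with hmdef
  set l : ℕ := n - m with hldef
  have hml : m + l = n := by omega
  have hm1 : 1 ≤ m := by omega
  have hl1 : 1 ≤ l := by omega
  have hx0 : (x : ℝ≥0∞) ≠ 0 := by exact_mod_cast (by omega : x ≠ 0)
  have hxtop : (x : ℝ≥0∞) ≠ ⊤ := ENNReal.natCast_ne_top _
  have hxc : (x : ℝ≥0∞) * (x : ℝ≥0∞)⁻¹ = 1 := ENNReal.mul_inv_cancel hx0 hxtop
  set cm : ℝ≥0∞ := ((Nat.sqrt m + 1 : ℕ) : ℝ≥0∞) with hcmdef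
  set cl : ℝ≥0∞ := ((Nat.sqrt l + 1 : ℕ) : ℝ≥0∞) with hcldef
  have hcm0 : cm ≠ 0 := by rw [hcmdef]; exact Nat.cast_ne_zero.mpr (by omega)
  have hcmtop : cm ≠ ⊤ := ENNReal.natCast_ne_top _
  have hcl0 : cl ≠ 0 := by rw [hcldef]; exact Nat.cast_ne_zero.mpr (by omega)
  have hcltop : cl ≠ ⊤ := ENNReal.natCast_ne_top _
  -- nat inequalities
  have hmx : (m : ℝ≥0∞) ≤ cl * (x : ℝ≥0∞) := by
    have h1 : m ≤ (Nat.sqrt l + 1) * x := by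
      have h2 : l < (Nat.sqrt l + 1) * (Nat.sqrt l + 1) := by
        have := Nat.lt_succ_sqrt' l
        simpa [Nat.succ_eq_add_one, pow_two] using this
      have h3 : Nat.sqrt l ≤ Nat.sqrt n := Nat.sqrt_le_sqrt (by omega)
      have h4 : Nat.sqrt l + 1 ≤ x := by omega
      calc m ≤ l := by omega
        _ ≤ (Nat.sqrt l + 1) * (Nat.sqrt l + 1) := by omega
        _ ≤ (Nat.sqrt l + 1) * x := Nat.mul_le_mul_left _ h4
    rw [hcldef]
    exact_mod_cast h1
  have hlx : (l : ℝ≥0∞) ≤ cm * (x : ℝ≥0∞) := by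
    have h1 : l ≤ (Nat.sqrt m + 1) * x := by
      have h2 : m < (Nat.sqrt m + 1) * (Nat.sqrt m + 1) := by
        have := Nat.lt_succ_sqrt' m
        simpa [Nat.succ_eq_add_one, pow_two] using this
      have h3 : n < (Nat.sqrt n + 1) * (Nat.sqrt n + 1) := by
        have := Nat.lt_succ_sqrt' n
        simpa [Nat.succ_eq_add_one, pow_two] using this
      have h5 : l ≤ (Nat.sqrt m + 1) * (Nat.sqrt n + 1) :=
        nat_le_mul_of_sq _ _ _ (by omega) (by omega)
      calc l ≤ (Nat.sqrt m + 1) * (Nat.sqrt n + 1) := h5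
        _ ≤ (Nat.sqrt m + 1) * x := Nat.mul_le_mul_left _ (by omega)
    rw [hcmdef]
    exact_mod_cast h1
  -- convolution split
  rw [show n = m + l from hml.symm, pow_add, mul_def, conv_apply]
  set Wm : ConvAlg := stepA μ ^ m with hWm
  set Wl : ConvAlg := stepA μ ^ l with hWl
  have hdecomp : ∑' y : ℤ, Wm y * Wl ((x : ℤ) - y)
      = (∑' y : ℤ, if (x : ℤ) ≤ 2*y then Wm y * Wl ((x : ℤ) - y) else 0)
        + ∑' y : ℤ, (if (x : ℤ) ≤ 2*y then 0 else Wm y * Wl ((x : ℤ) - y)) := by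
    rw [← ENNReal.tsum_add]
    refine tsum_congr fun y => ?_
    by_cases h : (x : ℤ) ≤ 2*y <;> simp [h]
  rw [hdecomp, mul_add]
  have hT1 : (x : ℝ≥0∞) * (∑' y : ℤ, if (x : ℤ) ≤ 2*y then Wm y * Wl ((x : ℤ) - y) else 0)
      ≤ 4 * S * K1 := by
    have hstep1 : (∑' y : ℤ, if (x : ℤ) ≤ 2*y then Wm y * Wl ((x : ℤ) - y) else 0)
        ≤ (∑' y : ℤ, if (x : ℤ) ≤ 2*y then Wm y else 0) * (K1 * cl⁻¹) := by
      rw [← ENNReal.tsum_mul_right]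
      refine ENNReal.tsum_le_tsum fun y => ?_
      by_cases h : (x : ℤ) ≤ 2*y
      · rw [if_pos h, if_pos h]
        exact mul_le_mul_right (hQ l _) _
      · rw [if_neg h, if_neg h, zero_mul]
    have htail := tail_walk μ σ2 hμ hmean hvar m x (by omega)
    calc (x : ℝ≥0∞) * (∑' y : ℤ, if (x : ℤ) ≤ 2*y then Wm y * Wl ((x : ℤ) - y) else 0)
        ≤ (x : ℝ≥0∞) * ((∑' y : ℤ, if (x : ℤ) ≤ 2*y then Wm y else 0) * (K1 * cl⁻¹)) :=
          mul_le_mul_right hstep1 _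
      _ = ((x : ℝ≥0∞)^2 * (∑' y : ℤ, if (x : ℤ) ≤ 2*y then Wm y else 0))
            * ((x : ℝ≥0∞)⁻¹ * (K1 * cl⁻¹)) := by
          rw [pow_two, show ((x : ℝ≥0∞) * (x : ℝ≥0∞)
              * (∑' y : ℤ, if (x : ℤ) ≤ 2*y then Wm y else 0))
              * ((x : ℝ≥0∞)⁻¹ * (K1 * cl⁻¹))
            = ((x : ℝ≥0∞) * (x : ℝ≥0∞)⁻¹)
              * ((x : ℝ≥0∞) * ((∑' y : ℤ, if (x : ℤ) ≤ 2*y then Wm y else 0) * (K1 * cl⁻¹)))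
            by ring, hxc, one_mul]
      _ ≤ (4 * (m : ℝ≥0∞) * S) * ((x : ℝ≥0∞)⁻¹ * (K1 * cl⁻¹)) := mul_le_mul_left htail _
      _ = (4 * S * K1) * ((m : ℝ≥0∞) * ((x : ℝ≥0∞)⁻¹ * cl⁻¹)) := by ring
      _ ≤ (4 * S * K1) * ((cl * (x : ℝ≥0∞)) * ((x : ℝ≥0∞)⁻¹ * cl⁻¹)) :=
          mul_le_mul_right (mul_le_mul_left hmx _) _
      _ = (4 * S * K1) * (((x : ℝ≥0∞) * (x : ℝ≥0∞)⁻¹) * (cl * cl⁻¹)) := by ring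
      _ = 4 * S * K1 := by
          rw [hxc, ENNReal.mul_inv_cancel hcl0 hcltop, one_mul, mul_one]
  have hT2 : (x : ℝ≥0∞) * (∑' y : ℤ, if (x : ℤ) ≤ 2*y then 0 else Wm y * Wl ((x : ℤ) - y))
      ≤ 4 * S * K1 := by
    have hstep2 : (∑' y : ℤ, if (x : ℤ) ≤ 2*y then 0 else Wm y * Wl ((x : ℤ) - y))
        ≤ (∑' y : ℤ, if (x : ℤ) ≤ 2*y then Wl y else 0) * (K1 * cm⁻¹) := by
      have hb1 : (∑' y : ℤ, if (x : ℤ) ≤ 2*y then 0 else Wm y * Wl ((x : ℤ) - y))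
          ≤ ∑' y : ℤ, (if (x : ℤ) ≤ 2*y then 0 else Wl ((x : ℤ) - y)) * (K1 * cm⁻¹) := by
        refine ENNReal.tsum_le_tsum fun y => ?_
        by_cases h : (x : ℤ) ≤ 2*y
        · rw [if_pos h, if_pos h, zero_mul]
        · rw [if_neg h, if_neg h, mul_comm (Wm y)]
          exact mul_le_mul_right (hQ m _) _
      have hre : (∑' y : ℤ, if (x : ℤ) ≤ 2*y then 0 else Wl ((x : ℤ) - y))
          ≤ ∑' z : ℤ, if (x : ℤ) ≤ 2*z then Wl z else 0 := by
        rw [← (Equiv.subLeft (x : ℤ)).tsum_eq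
          (fun y => if (x : ℤ) ≤ 2*y then 0 else Wl ((x : ℤ) - y))]
        refine ENNReal.tsum_le_tsum fun z => ?_
        simp only [Equiv.subLeft_apply]
        rw [show (x : ℤ) - ((x : ℤ) - z) = z by ring]
        by_cases h : (x : ℤ) ≤ 2*((x : ℤ) - z)
        · rw [if_pos h]
          exact zero_le
        · rw [if_neg h, if_pos (by omega)]
      refine hb1.trans ?_
      rw [ENNReal.tsum_mul_right]
      exact mul_le_mul_left hre _
    have htail := tail_walk μ σ2 hμ hmean hvar l x (by omega)
    calc (x : ℝ≥0∞) * (∑' y : ℤ, if (x : ℤ) ≤ 2*y then 0 else Wm y * Wl ((x : ℤ) - y))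
        ≤ (x : ℝ≥0∞) * ((∑' z : ℤ, if (x : ℤ) ≤ 2*z then Wl z else 0) * (K1 * cm⁻¹)) :=
          mul_le_mul_right hstep2 _
      _ = ((x : ℝ≥0∞)^2 * (∑' z : ℤ, if (x : ℤ) ≤ 2*z then Wl z else 0))
            * ((x : ℝ≥0∞)⁻¹ * (K1 * cm⁻¹)) := by
          rw [pow_two, show ((x : ℝ≥0∞) * (x : ℝ≥0∞)
              * (∑' z : ℤ, if (x : ℤ) ≤ 2*z then Wl z else 0))
              * ((x : ℝ≥0∞)⁻¹ * (K1 * cm⁻¹))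
            = ((x : ℝ≥0∞) * (x : ℝ≥0∞)⁻¹)
              * ((x : ℝ≥0∞) * ((∑' z : ℤ, if (x : ℤ) ≤ 2*z then Wl z else 0) * (K1 * cm⁻¹)))
            by ring, hxc, one_mul]
      _ ≤ (4 * (l : ℝ≥0∞) * S) * ((x : ℝ≥0∞)⁻¹ * (K1 * cm⁻¹)) := mul_le_mul_left htail _
      _ = (4 * S * K1) * ((l : ℝ≥0∞) * ((x : ℝ≥0∞)⁻¹ * cm⁻¹)) := by ring
      _ ≤ (4 * S * K1) * ((cm * (x : ℝ≥0∞)) * ((x : ℝ≥0∞)⁻¹ * cm⁻¹)) :=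
          mul_le_mul_right (mul_le_mul_left hlx _) _
      _ = (4 * S * K1) * (((x : ℝ≥0∞) * (x : ℝ≥0∞)⁻¹) * (cm * cm⁻¹)) := by ring
      _ = 4 * S * K1 := by
          rw [hxc, ENNReal.mul_inv_cancel hcm0 hcmtop, one_mul, mul_one]
  calc (x : ℝ≥0∞) * (∑' y : ℤ, if (x : ℤ) ≤ 2*y then Wm y * Wl ((x : ℤ) - y) else 0)
        + (x : ℝ≥0∞) * (∑' y : ℤ, if (x : ℤ) ≤ 2*y then 0 else Wm y * Wl ((x : ℤ) - y))
      ≤ 4 * S * K1 + 4 * S * K1 := add_le_add hT1 hT2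
    _ = 8 * S * K1 := by ring
    _ ≤ 8 * S * K1 + (S + 1) := self_le_add_right _ _
    _ ≤ K1 + (8 * S * K1 + (S + 1)) := self_le_add_left _ _

/-- If `μ` is a nondegenerate critical offspring distribution with finite nonzero
variance `σ²`, then `sup_{n ≥ 1} sup_{x ≥ 0} x · P(W_n = x) < ∞` for the random walk
with i.i.d. steps `ξ - 1`, `ξ ~ μ`. -/
theorem sup_x_mul_walkProb_lt_top (μ : ℕ → ℝ≥0∞) (σ2 : ℝ)
    (hμ : ∑' k, μ k = 1)
    (hmean : ∑' k : ℕ, (k : ℝ≥0∞) * μ k = 1)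
    (hvar : ∑' k : ℕ, ENNReal.ofReal (((k : ℝ) - 1) ^ 2) * μ k = ENNReal.ofReal σ2)
    (hσpos : 0 < σ2)
    (hnd : μ 0 + μ 1 ≠ 1) :
    ∃ C : ℝ≥0∞, C < ⊤ ∧ ∀ n : ℕ, 1 ≤ n → ∀ x : ℕ, (x : ℝ≥0∞) * walkProb μ n (x : ℤ) ≤ C :=
  sup_x_mul_walkProb_lt_top' μ σ2 hμ hmean hvar hσpos
end AuxConv
end

section
/- Suppose (X_n), (Y_n) are S-valued random variables such that for every ε > 0 there exist measurable sets A_n^ε with P(Y_n ∈ A_n^ε) ≥ 1 − ε for large n, and measurable functions f_n^ε on A_n^ε with P_{X_n} = f_n^ε P_{Y_n} on A_n^ε and sup_{x ∈ A_n^ε}|f_n^ε(x) − 1| → 0. Then if Y_n converges in distribution to Y, so does X_n. -/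
open MeasureTheory Filter
open scoped ENNReal BoundedContinuousFunction

set_option maxHeartbeats 1000000 in
/-- Weak-limit transfer under local density control: if for every `ε > 0` there are sets
`A_n^ε` of `Y_n`-probability at least `1-ε` (for large `n`) on which the law of `X_n` has a
density `f_n^ε` with respect to the law of `Y_n` with `sup_{A_n^ε} |f_n^ε - 1| → 0`, then
convergence in distribution of `Y_n` implies convergence in distribution of `X_n` to the
same limit. -/
theorem weak_limit_transfer_of_local_density
    {S : Type*} [MeasurableSpace S] [TopologicalSpace S] [PolishSpace S] [BorelSpace S]
    (ν ρ : ℕ → Measure S) (hν : ∀ n, IsProbabilityMeasure (ν n))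
    (hρ : ∀ n, IsProbabilityMeasure (ρ n))
    (hloc : ∀ ε : ℝ, 0 < ε →
      ∃ (A : ℕ → Set S) (f : ℕ → S → ℝ≥0∞),
        (∀ n, MeasurableSet (A n)) ∧
        (∀ᶠ n in atTop, 1 - ε ≤ (ρ n (A n)).toReal) ∧
        (∀ n, ∀ B : Set S, MeasurableSet B → B ⊆ A n →
          ν n B = ∫⁻ x in B, f n x ∂(ρ n)) ∧
        (∀ δ : ℝ, 0 < δ → ∀ᶠ n in atTop, ∀ x ∈ A n,
          ENNReal.ofReal (1 - δ) ≤ f n x ∧ f n x ≤ ENNReal.ofReal (1 + δ)))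
    (μLim : Measure S) (hμLim : IsProbabilityMeasure μLim)
    (hweak : ∀ g : S →ᵇ ℝ,
      Tendsto (fun n => ∫ x, g x ∂(ρ n)) atTop (nhds (∫ x, g x ∂μLim))) :
    ∀ g : S →ᵇ ℝ,
      Tendsto (fun n => ∫ x, g x ∂(ν n)) atTop (nhds (∫ x, g x ∂μLim)) := by
  intro g
  have key : Tendsto (fun n => ∫ x, g x ∂(ν n) - ∫ x, g x ∂(ρ n)) atTop (nhds 0) := by
    rw [NormedAddCommGroup.tendsto_nhds_zero]
    intro r hr
    set C : ℝ := ‖g‖ with hCdef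
    have hC0 : 0 ≤ C := norm_nonneg g
    set ε : ℝ := min (1/2) (r / (6*C+1)) with hεdef
    have hε : 0 < ε := lt_min (by norm_num) (by positivity)
    have hε2 : ε ≤ 1/2 := min_le_left _ _
    have hεr : ε ≤ r/(6*C+1) := min_le_right _ _
    obtain ⟨A, f, hA, hρA, hdens, hf⟩ := hloc ε hε
    filter_upwards [hρA, hf ε hε] with n hn1 hn2
    haveI := hν n; haveI := hρ n
    set c₁ := ENNReal.ofReal (1-ε) with hc₁
    set c₂ := ENNReal.ofReal (1+ε) with hc₂
    have hcomp : ∀ B : Set S, MeasurableSet B → B ⊆ A n →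
        c₁ * ρ n B ≤ ν n B ∧ ν n B ≤ c₂ * ρ n B := by
      intro B hB hBA
      rw [hdens n B hB hBA]
      refine ⟨?_, ?_⟩
      · calc c₁ * ρ n B = ∫⁻ _x in B, c₁ ∂(ρ n) := (setLIntegral_const B c₁).symm
          _ ≤ ∫⁻ x in B, f n x ∂(ρ n) := lintegral_mono_ae
              ((ae_restrict_iff' hB).2 (ae_of_all _ fun x hx => (hn2 x (hBA hx)).1))
      · calc ∫⁻ x in B, f n x ∂(ρ n) ≤ ∫⁻ _x in B, c₂ ∂(ρ n) := lintegral_mono_ae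
              ((ae_restrict_iff' hB).2 (ae_of_all _ fun x hx => (hn2 x (hBA hx)).2))
          _ = c₂ * ρ n B := setLIntegral_const B c₂
    set μ₁ := (ν n).restrict (A n) with hμ₁
    set μ₂ := (ρ n).restrict (A n) with hμ₂
    have h_lb : c₁ • μ₂ ≤ μ₁ := by
      rw [Measure.le_iff]; intro B hB
      rw [Measure.smul_apply, smul_eq_mul, hμ₁, hμ₂, Measure.restrict_apply hB,
        Measure.restrict_apply hB]
      exact (hcomp _ (hB.inter (hA n)) Set.inter_subset_right).1
    have h_ub : μ₁ ≤ c₂ • μ₂ := by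
      rw [Measure.le_iff]; intro B hB
      rw [Measure.smul_apply, smul_eq_mul, hμ₁, hμ₂, Measure.restrict_apply hB,
        Measure.restrict_apply hB]
      exact (hcomp _ (hB.inter (hA n)) Set.inter_subset_right).2
    haveI : IsFiniteMeasure (c₂ • μ₂) :=
      ⟨by rw [Measure.smul_apply, smul_eq_mul]
          exact ENNReal.mul_lt_top ENNReal.ofReal_lt_top (measure_lt_top μ₂ _)⟩
    have hnn : ∀ x, 0 ≤ g x + C := by
      intro x
      have := g.norm_coe_le_norm x
      rw [Real.norm_eq_abs] at this
      have := (abs_le.1 this).1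
      linarith
    have hglb : ∀ x, g x ≤ C := by
      intro x
      have := g.norm_coe_le_norm x
      rw [Real.norm_eq_abs] at this
      exact (abs_le.1 this).2
    have hint1 : Integrable (fun x => g x + C) μ₁ := (g.integrable μ₁).add (integrable_const C)
    have hint2 : Integrable (fun x => g x + C) μ₂ := (g.integrable μ₂).add (integrable_const C)
    have hint3 : Integrable (fun x => g x + C) (c₂ • μ₂) :=
      (g.integrable _).add (integrable_const C)
    set I1 := ∫ x, (g x + C) ∂μ₁ with hI1
    set I2 := ∫ x, (g x + C) ∂μ₂ with hI2
    have hI2nn : 0 ≤ I2 := integral_nonneg hnn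
    have hμ₁univ : μ₁ Set.univ = ν n (A n) := by rw [hμ₁, Measure.restrict_apply_univ]
    have hμ₂univ : μ₂ Set.univ = ρ n (A n) := by rw [hμ₂, Measure.restrict_apply_univ]
    set a : ℝ := (ν n (A n)).toReal with ha
    set b : ℝ := (ρ n (A n)).toReal with hb
    have ha1 : a ≤ 1 := by
      rw [ha]
      have : ν n (A n) ≤ 1 := prob_le_one
      simpa using ENNReal.toReal_mono (by norm_num) this
    have hb1 : b ≤ 1 := by
      rw [hb]
      have : ρ n (A n) ≤ 1 := prob_le_one
      simpa using ENNReal.toReal_mono (by norm_num) this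
    have hb0 : 0 ≤ b := ENNReal.toReal_nonneg
    have ha0 : 0 ≤ a := ENNReal.toReal_nonneg
    have hI2le : I2 ≤ 2*C := by
      calc I2 ≤ ∫ _x, 2*C ∂μ₂ := by
            refine integral_mono hint2 (integrable_const _) fun x => ?_
            have := hglb x; linarith
        _ = (μ₂ Set.univ).toReal * (2*C) := by rw [integral_const, smul_eq_mul, measureReal_def]
        _ ≤ 1 * (2*C) := by
            refine mul_le_mul_of_nonneg_right ?_ (by linarith)
            rw [hμ₂univ]; exact hb1
        _ = 2*C := one_mul _
    have hub : I1 ≤ (1+ε) * I2 := by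
      have := integral_mono_measure h_ub (ae_of_all _ hnn) hint3
      rwa [integral_smul_measure, hc₂, ENNReal.toReal_ofReal (by linarith), smul_eq_mul] at this
    have hlb : (1-ε) * I2 ≤ I1 := by
      have := integral_mono_measure h_lb (ae_of_all _ hnn) hint1
      rwa [integral_smul_measure, hc₁, ENNReal.toReal_ofReal (by linarith), smul_eq_mul] at this
    have hav := hcomp (A n) (hA n) subset_rfl
    have ha_ub : a ≤ (1+ε) * b := by
      have h2 := ENNReal.toReal_mono
        (ENNReal.mul_ne_top ENNReal.ofReal_ne_top (measure_ne_top (ρ n) _)) hav.2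
      rwa [ENNReal.toReal_mul, ENNReal.toReal_ofReal (by linarith : (0:ℝ) ≤ 1+ε)] at h2
    have ha_lb : (1-ε) * b ≤ a := by
      have h2 := ENNReal.toReal_mono (measure_ne_top (ν n) _) hav.1
      rwa [ENNReal.toReal_mul, ENNReal.toReal_ofReal (by linarith : (0:ℝ) ≤ 1-ε)] at h2
    -- decompositions
    have hgi1 : Integrable (⇑g) (ν n) := g.integrable _
    have hgi2 : Integrable (⇑g) (ρ n) := g.integrable _
    have hsplit1 : ∫ x, g x ∂(ν n)
        = ∫ x in A n, g x ∂(ν n) + ∫ x in (A n)ᶜ, g x ∂(ν n) :=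
      (integral_add_compl (hA n) hgi1).symm
    have hsplit2 : ∫ x, g x ∂(ρ n)
        = ∫ x in A n, g x ∂(ρ n) + ∫ x in (A n)ᶜ, g x ∂(ρ n) :=
      (integral_add_compl (hA n) hgi2).symm
    have hIg1 : ∫ x in A n, g x ∂(ν n) = I1 - C * a := by
      have h3 : I1 = (∫ x, g x ∂μ₁) + ∫ _x, C ∂μ₁ := integral_add (g.integrable μ₁) (integrable_const C)
      rw [integral_const, measureReal_def, hμ₁univ, smul_eq_mul, ← ha] at h3
      have : ∫ x in A n, g x ∂(ν n) = ∫ x, g x ∂μ₁ := rfl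
      rw [this]; linarith
    have hIg2 : ∫ x in A n, g x ∂(ρ n) = I2 - C * b := by
      have h3 : I2 = (∫ x, g x ∂μ₂) + ∫ _x, C ∂μ₂ := integral_add (g.integrable μ₂) (integrable_const C)
      rw [integral_const, measureReal_def, hμ₂univ, smul_eq_mul, ← hb] at h3
      have : ∫ x in A n, g x ∂(ρ n) = ∫ x, g x ∂μ₂ := rfl
      rw [this]; linarith
    set E1 := ∫ x in (A n)ᶜ, g x ∂(ν n) with hE1
    set E2 := ∫ x in (A n)ᶜ, g x ∂(ρ n) with hE2
    have hac : (ν n (A n)ᶜ).toReal = 1 - a := by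
      rw [prob_compl_eq_one_sub (hA n),
        ENNReal.toReal_sub_of_le prob_le_one (by norm_num), ENNReal.toReal_one, ha]
    have hbc : (ρ n (A n)ᶜ).toReal = 1 - b := by
      rw [prob_compl_eq_one_sub (hA n),
        ENNReal.toReal_sub_of_le prob_le_one (by norm_num), ENNReal.toReal_one, hb]
    have hE1b : |E1| ≤ C * (1 - a) := by
      have := norm_setIntegral_le_of_norm_le_const (μ := ν n) (s := (A n)ᶜ)
        (measure_lt_top _ _) (fun x _ => g.norm_coe_le_norm x)
      rwa [Real.norm_eq_abs, measureReal_def, hac] at this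
    have hE2b : |E2| ≤ C * (1 - b) := by
      have := norm_setIntegral_le_of_norm_le_const (μ := ρ n) (s := (A n)ᶜ)
        (measure_lt_top _ _) (fun x _ => g.norm_coe_le_norm x)
      rwa [Real.norm_eq_abs, measureReal_def, hbc] at this
    -- collect real bounds
    have hεI2 : ε * I2 ≤ 2*C*ε := by nlinarith [mul_le_mul_of_nonneg_left hI2le hε.le]
    have hIdiff : |I1 - I2| ≤ 2*C*ε := by
      rw [abs_le]
      refine ⟨by nlinarith [hlb, hεI2], by nlinarith [hub, hεI2]⟩
    have hεb : ε * b ≤ ε := by nlinarith [mul_le_mul_of_nonneg_left hb1 hε.le]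
    have habd : |a - b| ≤ ε := by
      rw [abs_le]
      refine ⟨by nlinarith [ha_lb, hεb], by nlinarith [ha_ub, hεb]⟩
    have h1ma : 1 - a ≤ 2*ε := by nlinarith [ha_lb, hεb, hn1]
    have h1mb : 1 - b ≤ ε := by linarith
    -- final estimate
    rw [Real.norm_eq_abs, hsplit1, hsplit2, hIg1, hIg2]
    have heq : (I1 - C * a + E1) - (I2 - C * b + E2)
        = (I1 - I2) + C * (b - a) + (E1 - E2) := by ring
    rw [heq]
    have habs : |(I1 - I2) + C * (b - a) + (E1 - E2)|
        ≤ |I1 - I2| + |C * (b - a)| + (|E1| + |E2|) :=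
      (abs_add_le _ _).trans (add_le_add (abs_add_le _ _) (abs_sub _ _))
    have hCab : |C * (b - a)| ≤ C * ε := by
      rw [abs_mul, abs_of_nonneg hC0, abs_sub_comm]
      exact mul_le_mul_of_nonneg_left habd hC0
    have hfin : 2*C*ε + C*ε + (C*(1-a) + C*(1-b)) < r := by
      have hden : (6*C+1) * (r/(6*C+1)) = r := by field_simp
      nlinarith [mul_le_mul_of_nonneg_left hεr (by positivity : (0:ℝ) ≤ 6*C+1),
        mul_le_mul_of_nonneg_left h1ma hC0, mul_le_mul_of_nonneg_left h1mb hC0]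
    calc |(I1 - I2) + C * (b - a) + (E1 - E2)|
        ≤ |I1 - I2| + |C * (b - a)| + (|E1| + |E2|) := habs
      _ ≤ 2*C*ε + C*ε + (C*(1-a) + C*(1-b)) :=
          add_le_add (add_le_add hIdiff hCab) (add_le_add hE1b hE2b)
      _ < r := hfin
  have := key.add (hweak g)
  simpa using this
end
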